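/- (Polymatroid structure of the receiver region.) Let (U_S : S∈W) and Y be finitely-valued random variables, where W is a finite poset with a fixed factorization of the joint law consistent with the poset (superposition-admitting). Define ρ(B) = I(U_B ; Y | U_{W\B}) for down-sets B of W, assuming the auxiliary variables (U_S) satisfy the Markov structure p(U_W) = Π_S p(U_S | U_{↑{S}\{S}}). Then ρ, restricted to the down-set lattice of W, is normalized (ρ(∅)=0), non-decreasing (ρ(B) ≤ ρ(B') for down-sets B ⊆ B'), and submodular (ρ(B∩B') + ρ(B∪B') ≤ ρ(B) + ρ(B') for down-sets B, B'), i.e., the region {R ≥ 0 : R(B) ≤ ρ(B) for all down-sets B} projects to a polymatroid. -/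

import Mathlib

open Finset

variable {Ω : Type*} [Fintype Ω]

/-- Probability that the random variable `X` takes the value `b`. -/
noncomputable def pOf {β : Type*} [DecidableEq β] (μ : Ω → ℝ) (X : Ω → β) (b : β) : ℝ :=
  ∑ ω : Ω, if X ω = b then μ ω else 0

/-- Shannon entropy (base 2) of a finitely-valued random variable. -/
noncomputable def entRV {β : Type*} [Fintype β] [DecidableEq β] (μ : Ω → ℝ) (X : Ω → β) : ℝ :=
  -∑ b : β, pOf μ X b * Real.logb 2 (pOf μ X b)

variable {E α : Type*} [Fintype E] [DecidableEq E] [Fintype α] [DecidableEq α]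

/-- The tuple of random variables indexed by a finite index set `G`. -/
def tupRV (U : E → Ω → α) (G : Finset E) : Ω → (↥G → α) := fun ω S => U S.1 ω

/-- Joint entropy `H(U_G)`. -/
noncomputable def jentU (μ : Ω → ℝ) (U : E → Ω → α) (G : Finset E) : ℝ :=
  entRV μ (tupRV U G)

/-- Conditional entropy `H(U_A | U_B)`. -/
noncomputable def centU (μ : Ω → ℝ) (U : E → Ω → α) (A B : Finset E) : ℝ :=
  jentU μ U (A ∪ B) - jentU μ U B

/-- Conditional mutual information `I(X ; Y | Z)`. -/
noncomputable def cmiRV {β γ' δ' : Type*} [Fintype β] [DecidableEq β]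
    [Fintype γ'] [DecidableEq γ'] [Fintype δ'] [DecidableEq δ']
    (μ : Ω → ℝ) (X : Ω → β) (Y : Ω → γ') (Z : Ω → δ') : ℝ :=
  entRV μ (fun ω => (X ω, Z ω)) + entRV μ (fun ω => (Y ω, Z ω))
    - entRV μ (fun ω => (X ω, Y ω, Z ω)) - entRV μ Z

variable [PartialOrder E] [DecidableRel (α := E) (· ≤ ·)]

/-- The up-set `↑{S}` of an element in a finite poset. -/
def upF (S : E) : Finset E := Finset.univ.filter (S ≤ ·)

/-- The marginal, on the coordinates in `A`, of a pmf `q` on tuples. -/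
noncomputable def margOn (q : (E → α) → ℝ) (A : Finset E) (u : E → α) : ℝ :=
  ∑ v : E → α, if ∀ a ∈ A, v a = u a then q v else 0

/-- The conditional probability `q(u_S | u_A)`. -/
noncomputable def condP (q : (E → α) → ℝ) (A : Finset E) (S : E) (u : E → α) : ℝ :=
  margOn q (insert S A) u / margOn q A u

/-! ### Auxiliary lemmas about `pOf` and `entRV` -/

section PofLemmas

set_option linter.unusedSectionVars false

variable {β γ δ : Type*} [DecidableEq β] [DecidableEq γ] [DecidableEq δ]

lemma pOf_nonneg {μ : Ω → ℝ} (hμ : ∀ ω, 0 ≤ μ ω) (X : Ω → β) (b : β) :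
    0 ≤ pOf μ X b := by
  apply Finset.sum_nonneg; intro ω _
  split <;> simp [hμ ω]

lemma pOf_le {μ : Ω → ℝ} (hμ : ∀ ω, 0 ≤ μ ω) {Tv : Ω → γ} {V : Ω → β} {c : γ} {b : β}
    (h : ∀ ω, Tv ω = c → V ω = b) : pOf μ Tv c ≤ pOf μ V b := by
  apply Finset.sum_le_sum; intro ω _
  by_cases hc : Tv ω = c
  · simp [hc, h ω hc]
  · rw [if_neg hc]; split <;> simp [hμ ω]

lemma sum_pOf_mul [Fintype β] (μ : Ω → ℝ) (V : Ω → β) (F : β → ℝ) :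
    ∑ b : β, pOf μ V b * F b = ∑ ω : Ω, μ ω * F (V ω) := by
  unfold pOf
  calc ∑ b : β, (∑ ω : Ω, if V ω = b then μ ω else 0) * F b
      = ∑ b : β, ∑ ω : Ω, (if V ω = b then μ ω * F b else 0) := by
        refine Finset.sum_congr rfl fun b _ => ?_
        rw [Finset.sum_mul]
        refine Finset.sum_congr rfl fun ω _ => ?_
        split <;> simp
    _ = ∑ ω : Ω, ∑ b : β, (if V ω = b then μ ω * F b else 0) := Finset.sum_comm
    _ = ∑ ω : Ω, μ ω * F (V ω) := by
        refine Finset.sum_congr rfl fun ω _ => ?_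
        simp

lemma sum_pOf [Fintype β] (μ : Ω → ℝ) (V : Ω → β) :
    ∑ b : β, pOf μ V b = ∑ ω : Ω, μ ω := by
  have := sum_pOf_mul μ V (fun _ => (1:ℝ))
  simpa using this

lemma entRV_eq_omega [Fintype β] (μ : Ω → ℝ) (V : Ω → β) :
    entRV μ V = -∑ ω : Ω, μ ω * Real.logb 2 (pOf μ V (V ω)) := by
  unfold entRV
  rw [sum_pOf_mul μ V (fun b => Real.logb 2 (pOf μ V b))]

lemma pOf_comp_inj (μ : Ω → ℝ) (X : Ω → β) {f : β → γ} (hf : Function.Injective f) (b : β) :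
    pOf μ (fun ω => f (X ω)) (f b) = pOf μ X b := by
  unfold pOf
  refine Finset.sum_congr rfl fun ω _ => ?_
  simp [hf.eq_iff]

lemma entRV_comp_inj [Fintype β] [Fintype γ] (μ : Ω → ℝ) (X : Ω → β) {f : β → γ}
    (hf : Function.Injective f) :
    entRV μ (fun ω => f (X ω)) = entRV μ X := by
  rw [entRV_eq_omega, entRV_eq_omega]
  congr 1
  refine Finset.sum_congr rfl fun ω _ => ?_
  rw [pOf_comp_inj μ X hf]

lemma sum_pOf_pair_left [Fintype β] (μ : Ω → ℝ) (X : Ω → β) (Z : Ω → γ) (z : γ) :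
    ∑ x : β, pOf μ (fun ω => (X ω, Z ω)) (x, z) = pOf μ Z z := by
  unfold pOf
  rw [Finset.sum_comm]
  refine Finset.sum_congr rfl fun ω _ => ?_
  simp [Prod.ext_iff, ite_and]

end PofLemmas

/-! ### Strong subadditivity of Shannon entropy -/

lemma gibbs_pointwise {p A B C : ℝ} (hp : 0 ≤ p) (hpA : p ≤ A) (hpB : p ≤ B) (hpC : p ≤ C)
    (hC : 0 ≤ C) :
    p * (Real.log A + Real.log B - Real.log p - Real.log C) ≤ A * B / C - p := by
  rcases eq_or_lt_of_le hp with h0 | hp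
  · rw [← h0]
    have hA : (0:ℝ) ≤ A := le_trans hp hpA
    have hB : (0:ℝ) ≤ B := le_trans hp hpB
    simp [← h0]
    positivity
  · have hA : (0:ℝ) < A := lt_of_lt_of_le hp hpA
    have hB : (0:ℝ) < B := lt_of_lt_of_le hp hpB
    have hC' : (0:ℝ) < C := lt_of_lt_of_le hp hpC
    have h1 : Real.log (A * B / (p * C)) ≤ A * B / (p * C) - 1 :=
      Real.log_le_sub_one_of_pos (by positivity)
    have h2 : Real.log (A * B / (p * C)) =
        Real.log A + Real.log B - Real.log p - Real.log C := by
      rw [Real.log_div (by positivity) (by positivity), Real.log_mul hA.ne' hB.ne',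
        Real.log_mul hp.ne' hC'.ne']
      ring
    rw [h2] at h1
    have h3 := mul_le_mul_of_nonneg_left h1 hp.le
    calc p * (Real.log A + Real.log B - Real.log p - Real.log C)
        ≤ p * (A * B / (p * C) - 1) := h3
      _ = A * B / C - p := by field_simp

/-- Strong subadditivity (submodularity) of Shannon entropy. -/
lemma ssa {β γ δ : Type*} [Fintype β] [DecidableEq β] [Fintype γ] [DecidableEq γ]
    [Fintype δ] [DecidableEq δ]
    (μ : Ω → ℝ) (hμ : ∀ ω, 0 ≤ μ ω) (hμ1 : ∑ ω : Ω, μ ω = 1)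
    (X : Ω → β) (Y : Ω → γ) (Z : Ω → δ) :
    entRV μ (fun ω => (X ω, Y ω, Z ω)) + entRV μ Z
      ≤ entRV μ (fun ω => (X ω, Z ω)) + entRV μ (fun ω => (Y ω, Z ω)) := by
  classical
  set T : Ω → β × γ × δ := fun ω => (X ω, Y ω, Z ω) with hT
  set p : β × γ × δ → ℝ := pOf μ T with hp
  set a : β × δ → ℝ := pOf μ (fun ω => (X ω, Z ω)) with ha
  set b : γ × δ → ℝ := pOf μ (fun ω => (Y ω, Z ω)) with hb
  set c : δ → ℝ := pOf μ Z with hc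
  have hp0 : ∀ t, 0 ≤ p t := fun t => pOf_nonneg hμ T t
  have hc0 : ∀ z, 0 ≤ c z := fun z => pOf_nonneg hμ _ z
  have hpa : ∀ t : β × γ × δ, p t ≤ a (t.1, t.2.2) := by
    intro t
    exact pOf_le hμ (fun ω h => by rw [hT] at h; rw [← h])
  have hpb : ∀ t : β × γ × δ, p t ≤ b t.2 := by
    intro t
    exact pOf_le hμ (fun ω h => by rw [hT] at h; rw [← h])
  have hpc : ∀ t : β × γ × δ, p t ≤ c t.2.2 := by
    intro t
    exact pOf_le hμ (fun ω h => by rw [hT] at h; rw [← h])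
  have eXZ : entRV μ (fun ω => (X ω, Z ω)) =
      -∑ t : β × γ × δ, p t * Real.logb 2 (a (t.1, t.2.2)) := by
    rw [entRV_eq_omega]
    rw [hp, sum_pOf_mul μ T (fun t => Real.logb 2 (a (t.1, t.2.2)))]
  have eYZ : entRV μ (fun ω => (Y ω, Z ω)) =
      -∑ t : β × γ × δ, p t * Real.logb 2 (b t.2) := by
    rw [entRV_eq_omega]
    rw [hp, sum_pOf_mul μ T (fun t => Real.logb 2 (b t.2))]
  have eZ : entRV μ Z = -∑ t : β × γ × δ, p t * Real.logb 2 (c t.2.2) := by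
    rw [entRV_eq_omega]
    rw [hp, sum_pOf_mul μ T (fun t => Real.logb 2 (c t.2.2))]
  have eT : entRV μ T = -∑ t : β × γ × δ, p t * Real.logb 2 (p t) := rfl
  have hlog2 : (0:ℝ) < Real.log 2 := Real.log_pos (by norm_num)
  have expand : ∀ F : β × γ × δ → ℝ,
      ∑ t : β × γ × δ, p t * Real.logb 2 (F t)
        = (∑ t : β × γ × δ, p t * Real.log (F t)) / Real.log 2 := by
    intro F
    rw [Finset.sum_div]
    refine Finset.sum_congr rfl fun t _ => ?_
    rw [Real.logb, div_eq_mul_inv, div_eq_mul_inv]; ring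
  have key : ∑ t : β × γ × δ, p t *
      (Real.log (a (t.1, t.2.2)) + Real.log (b t.2) - Real.log (p t) - Real.log (c t.2.2))
      ≤ 0 := by
    have hsum1 : ∑ t : β × γ × δ, p t = 1 := by rw [hp, sum_pOf]; exact hμ1
    have bound : ∀ t : β × γ × δ, p t *
        (Real.log (a (t.1, t.2.2)) + Real.log (b t.2) - Real.log (p t) - Real.log (c t.2.2))
        ≤ a (t.1, t.2.2) * b t.2 / c t.2.2 - p t := fun t =>
      gibbs_pointwise (hp0 t) (hpa t) (hpb t) (hpc t) (hc0 _)
    have hax : ∀ z : δ, ∑ x : β, a (x, z) = c z := by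
      intro z; rw [ha, hc]; exact sum_pOf_pair_left μ X Z z
    have hby : ∀ z : δ, ∑ y : γ, b (y, z) = c z := by
      intro z; rw [hb, hc]; exact sum_pOf_pair_left μ Y Z z
    have habc : ∑ t : β × γ × δ, a (t.1, t.2.2) * b t.2 / c t.2.2 ≤ 1 := by
      have hsplit : ∑ t : β × γ × δ, a (t.1, t.2.2) * b t.2 / c t.2.2
          = ∑ z : δ, ∑ x : β, ∑ y : γ, a (x, z) * b (y, z) / c z := by
        rw [Fintype.sum_prod_type]
        have h1 : ∀ x : β, ∑ yz : γ × δ, a (x, yz.2) * b yz / c yz.2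
            = ∑ z : δ, ∑ y : γ, a (x, z) * b (y, z) / c z := by
          intro x
          rw [Fintype.sum_prod_type]
          exact Finset.sum_comm
        calc ∑ x : β, ∑ yz : γ × δ, a (x, yz.2) * b yz / c yz.2
            = ∑ x : β, ∑ z : δ, ∑ y : γ, a (x, z) * b (y, z) / c z :=
              Finset.sum_congr rfl fun x _ => h1 x
          _ = ∑ z : δ, ∑ x : β, ∑ y : γ, a (x, z) * b (y, z) / c z := Finset.sum_comm
      rw [hsplit]
      have hz : ∀ z : δ, ∑ x : β, ∑ y : γ, a (x, z) * b (y, z) / c z ≤ c z := by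
        intro z
        have : ∑ x : β, ∑ y : γ, a (x, z) * b (y, z) / c z
            = (∑ x : β, a (x, z)) * (∑ y : γ, b (y, z)) / c z := by
          rw [Finset.sum_mul, Finset.sum_div]
          refine Finset.sum_congr rfl fun x _ => ?_
          rw [Finset.mul_sum, Finset.sum_div]
        rw [this, hax z, hby z]
        rcases eq_or_lt_of_le (hc0 z) with h0 | h0
        · rw [← h0]; simp
        · rw [mul_div_assoc, div_self h0.ne', mul_one]
      calc ∑ z : δ, ∑ x : β, ∑ y : γ, a (x, z) * b (y, z) / c z
          ≤ ∑ z : δ, c z := Finset.sum_le_sum fun z _ => hz z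
        _ = ∑ ω : Ω, μ ω := by rw [hc, sum_pOf]
        _ = 1 := hμ1
    calc ∑ t : β × γ × δ, p t * (Real.log (a (t.1, t.2.2)) + Real.log (b t.2)
          - Real.log (p t) - Real.log (c t.2.2))
        ≤ ∑ t : β × γ × δ, (a (t.1, t.2.2) * b t.2 / c t.2.2 - p t) :=
          Finset.sum_le_sum fun t _ => bound t
      _ = (∑ t : β × γ × δ, a (t.1, t.2.2) * b t.2 / c t.2.2)
            - ∑ t : β × γ × δ, p t := Finset.sum_sub_distrib _ _
      _ ≤ 0 := by rw [hsum1]; linarith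
  have key2 : (∑ t : β × γ × δ, p t * Real.log (a (t.1, t.2.2)))
      + (∑ t : β × γ × δ, p t * Real.log (b t.2))
      - (∑ t : β × γ × δ, p t * Real.log (p t))
      - (∑ t : β × γ × δ, p t * Real.log (c t.2.2)) ≤ 0 := by
    have heq : (∑ t : β × γ × δ, p t * Real.log (a (t.1, t.2.2)))
      + (∑ t : β × γ × δ, p t * Real.log (b t.2))
      - (∑ t : β × γ × δ, p t * Real.log (p t))
      - (∑ t : β × γ × δ, p t * Real.log (c t.2.2))
        = ∑ t : β × γ × δ, p t *
          (Real.log (a (t.1, t.2.2)) + Real.log (b t.2) - Real.log (p t)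
            - Real.log (c t.2.2)) := by
      rw [← Finset.sum_add_distrib, ← Finset.sum_sub_distrib, ← Finset.sum_sub_distrib]
      exact Finset.sum_congr rfl fun t _ => by ring
    rw [heq]; exact key
  rw [eXZ, eYZ, eZ, eT, expand (fun t => a (t.1, t.2.2)), expand (fun t => b t.2),
    expand (fun t => c t.2.2), expand p]
  set Sa := ∑ t : β × γ × δ, p t * Real.log (a (t.1, t.2.2))
  set Sb := ∑ t : β × γ × δ, p t * Real.log (b t.2)
  set Sp := ∑ t : β × γ × δ, p t * Real.log (p t)
  set Sc := ∑ t : β × γ × δ, p t * Real.log (c t.2.2)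
  have hfin : (Sa + Sb) / Real.log 2 ≤ (Sp + Sc) / Real.log 2 :=
    (div_le_div_iff_of_pos_right hlog2).mpr (by linarith)
  rw [add_div, add_div] at hfin
  linarith

/-! ### Marginal lemmas -/

set_option linter.unusedSectionVars false

section MargBasic
variable (q : (E → α) → ℝ)

lemma margOn_congr {A : Finset E} {u u' : E → α}
    (h : ∀ a ∈ A, u a = u' a) : margOn q A u = margOn q A u' := by
  unfold margOn
  refine Finset.sum_congr rfl fun v _ => ?_
  have hiff : (∀ a ∈ A, v a = u a) ↔ (∀ a ∈ A, v a = u' a) := by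
    constructor
    · intro hv a ha; rw [hv a ha, h a ha]
    · intro hv a ha; rw [hv a ha, ← h a ha]
  rw [if_congr hiff rfl rfl]

lemma margOn_nonneg (hq0 : ∀ v, 0 ≤ q v) (A : Finset E) (u : E → α) :
    0 ≤ margOn q A u := by
  apply Finset.sum_nonneg; intro v _
  split <;> simp [hq0 v]

lemma margOn_mono (hq0 : ∀ v, 0 ≤ q v) {A B : Finset E} (hAB : A ⊆ B) (u : E → α) :
    margOn q B u ≤ margOn q A u := by
  apply Finset.sum_le_sum; intro v _
  by_cases hB : ∀ a ∈ B, v a = u a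
  · rw [if_pos hB, if_pos (fun a ha => hB a (hAB ha))]
  · rw [if_neg hB]; split <;> simp [hq0 v]

lemma margOn_self_le (hq0 : ∀ v, 0 ≤ q v) (A : Finset E) (u : E → α) :
    q u ≤ margOn q A u := by
  unfold margOn
  have := Finset.single_le_sum (f := fun v => if ∀ a ∈ A, v a = u a then q v else 0)
    (fun v _ => by split <;> simp [hq0 v]) (Finset.mem_univ u)
  simpa using this

lemma margOn_empty (u : E → α) : margOn q ∅ u = ∑ v : E → α, q v := by
  unfold margOn; simp

lemma margOn_univ (u : E → α) : margOn q Finset.univ u = q u := by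
  unfold margOn
  calc (∑ v : E → α, if ∀ a ∈ Finset.univ, v a = u a then q v else 0)
      = ∑ v : E → α, if v = u then q v else 0 := by
        refine Finset.sum_congr rfl fun v _ => ?_
        refine if_congr ?_ rfl rfl
        simp [funext_iff]
    _ = q u := by simp

lemma margOn_insert {A : Finset E} {S : E} (hS : S ∉ A) (u : E → α) :
    margOn q A u = ∑ a : α, margOn q (insert S A) (Function.update u S a) := by
  unfold margOn
  rw [Finset.sum_comm]
  refine Finset.sum_congr rfl fun v _ => ?_
  by_cases hv : ∀ a ∈ A, v a = u a
  · rw [if_pos hv]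
    symm
    have hcond : ∀ a : α, (∀ x ∈ insert S A, v x = Function.update u S a x) ↔ v S = a := by
      intro a
      constructor
      · intro h
        have := h S (mem_insert_self _ _)
        rwa [Function.update_self] at this
      · intro h x hx
        rcases mem_insert.1 hx with rfl | hxA
        · rw [Function.update_self]; exact h
        · rw [Function.update_of_ne (by rintro rfl; exact hS hxA), hv x hxA]
    calc (∑ a : α, if ∀ x ∈ insert S A, v x = Function.update u S a x then q v else 0)
        = ∑ a : α, if v S = a then q v else 0 := by
          refine Finset.sum_congr rfl fun a _ => ?_
          rw [if_congr (hcond a) rfl rfl]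
      _ = q v := by simp
  · rw [if_neg hv]
    symm; apply Finset.sum_eq_zero; intro a _
    rw [if_neg]
    intro h
    apply hv
    intro x hx
    have := h x (mem_insert_of_mem hx)
    rwa [Function.update_of_ne (by rintro rfl; exact hS hx)] at this

end MargBasic

/-- Summing a function of `update v M a` over both `v` and `a`. -/
lemma sum_update_free (M : E) (g : (E → α) → ℝ) :
    ∑ v : E → α, ∑ a : α, g (Function.update v M a)
      = (Fintype.card α : ℝ) * ∑ v : E → α, g v := by
  have hbij : Function.Bijective
      (fun p : (E → α) × α => (Function.update p.1 M p.2, p.1 M)) := by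
    rw [Function.bijective_iff_has_inverse]
    refine ⟨fun p => (Function.update p.1 M p.2, p.1 M), ?_, ?_⟩
    · rintro ⟨v, a⟩
      simp [Function.update_idem, Function.update_self, Function.update_eq_self]
    · rintro ⟨v, a⟩
      simp [Function.update_idem, Function.update_self, Function.update_eq_self]
  calc ∑ v : E → α, ∑ a : α, g (Function.update v M a)
      = ∑ p : (E → α) × α, g (Function.update p.1 M p.2) := by
        rw [Fintype.sum_prod_type]
    _ = ∑ p : (E → α) × α, g p.1 :=
        Fintype.sum_bijective _ hbij _ _ (fun p => rfl)
    _ = ∑ v : E → α, ∑ _a : α, g v := by rw [Fintype.sum_prod_type]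
    _ = (Fintype.card α : ℝ) * ∑ v : E → α, g v := by
        simp [Finset.mul_sum, mul_comm]

/-- Total mass of a marginal. -/
lemma sum_margOn (q : (E → α) → ℝ) (hq1 : ∑ v : E → α, q v = 1) :
    ∀ (n : ℕ) (G : Finset E), (Finset.univ \ G).card = n →
      ∑ v : E → α, margOn q G v = (Fintype.card α : ℝ) ^ n := by
  intro n
  induction n with
  | zero =>
    intro G hc
    have hGuniv : G = Finset.univ := by
      have h1 : Finset.univ \ G = ∅ := Finset.card_eq_zero.1 hc
      apply Finset.eq_univ_iff_forall.2
      intro x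
      by_contra hxG
      have : x ∈ Finset.univ \ G := mem_sdiff.2 ⟨mem_univ x, hxG⟩
      rw [h1] at this; exact absurd this (notMem_empty x)
    subst hGuniv
    simp only [pow_zero]
    rw [Finset.sum_congr rfl (fun v _ => margOn_univ q v), hq1]
  | succ n ih =>
    intro G hc
    have hne : (Finset.univ \ G).Nonempty := by
      rw [← Finset.card_pos, hc]; omega
    obtain ⟨M, hM⟩ := hne
    have hMG : M ∉ G := (mem_sdiff.1 hM).2
    have hcard : (Finset.univ \ insert M G).card = n := by
      rw [Finset.sdiff_insert, Finset.card_erase_of_mem hM, hc]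
      omega
    calc ∑ v : E → α, margOn q G v
        = ∑ v : E → α, ∑ a : α, margOn q (insert M G) (Function.update v M a) :=
          Finset.sum_congr rfl fun v _ => margOn_insert q hMG v
      _ = (Fintype.card α : ℝ) * ∑ v : E → α, margOn q (insert M G) v :=
          sum_update_free M _
      _ = (Fintype.card α : ℝ) ^ (n + 1) := by
          rw [ih (insert M G) hcard, pow_succ]; ring

lemma mem_upF {S x : E} : x ∈ upF S ↔ S ≤ x := by simp [upF]

lemma insert_upF (S : E) : insert S (upF S \ {S}) = upF S := by
  rw [← Finset.erase_eq, Finset.insert_erase (mem_upF.2 le_rfl)]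

lemma condP_nonneg (q : (E → α) → ℝ) (hq0 : ∀ v, 0 ≤ q v) (A : Finset E) (S : E)
    (u : E → α) : 0 ≤ condP q A S u :=
  div_nonneg (margOn_nonneg q hq0 _ _) (margOn_nonneg q hq0 _ _)

lemma condP_congr (q : (E → α) → ℝ) {A : Finset E} {S : E} {u u' : E → α}
    (h : ∀ a ∈ insert S A, u a = u' a) : condP q A S u = condP q A S u' := by
  unfold condP
  rw [margOn_congr q h, margOn_congr q (fun a ha => h a (mem_insert_of_mem ha))]

/-- Sum over the value at `S` of the conditionals is at most 1. -/
lemma sum_condP_le (q : (E → α) → ℝ) (hq0 : ∀ v, 0 ≤ q v) (S : E) (u : E → α) :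
    ∑ a : α, condP q (upF S \ {S}) S (Function.update u S a) ≤ 1 := by
  have hSnotin : S ∉ upF S \ {S} := fun h => (mem_sdiff.1 h).2 (mem_singleton_self S)
  have hdenom : ∀ a : α, margOn q (upF S \ {S}) (Function.update u S a)
      = margOn q (upF S \ {S}) u := by
    intro a
    apply margOn_congr
    intro x hx
    exact (Function.update_of_ne (by rintro rfl; exact hSnotin hx) _ _)
  unfold condP
  rw [Finset.sum_congr rfl (fun a _ => by rw [hdenom a, insert_upF]), ← Finset.sum_div]
  rw [show (∑ a : α, margOn q (upF S) (Function.update u S a))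
      = margOn q (upF S \ {S}) u from by
    rw [margOn_insert q hSnotin u]
    exact Finset.sum_congr rfl fun a _ => by rw [insert_upF]]
  rcases eq_or_ne (margOn q (upF S \ {S}) u) 0 with h0 | h0
  · rw [h0, div_zero]; norm_num
  · rw [div_self h0]

/-- Mass bound for the product of conditionals over an up-set. -/
lemma sum_prodP_le (q : (E → α) → ℝ) (hq0 : ∀ v, 0 ≤ q v) (hα : Nonempty α) :
    ∀ (n : ℕ) (G : Finset E), (∀ x ∈ G, ∀ y, x ≤ y → y ∈ G) → G.card = n →
      ∑ v : E → α, ∏ R ∈ G, condP q (upF R \ {R}) R v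
        ≤ (Fintype.card (E → α) : ℝ) / (Fintype.card α : ℝ) ^ n := by
  have hcα : (0:ℝ) < (Fintype.card α : ℝ) := by
    have := Fintype.card_pos_iff.2 hα
    exact_mod_cast this
  intro n
  induction n with
  | zero =>
    intro G _ hc
    have : G = ∅ := Finset.card_eq_zero.1 hc
    subst this
    simp [Finset.card_univ]
  | succ n ih =>
    intro G hG hc
    have hne : G.Nonempty := by rw [← Finset.card_pos, hc]; omega
    obtain ⟨M, hMG, hMmin⟩ : ∃ M ∈ G, ∀ x ∈ G, ¬ x < M := by
      obtain ⟨M, hM⟩ := Finset.exists_minimal hne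
      exact ⟨M, hM.1, fun x hx hlt => lt_irrefl _ (lt_of_lt_of_le hlt (hM.2 hx hlt.le))⟩
    have hG' : ∀ x ∈ G.erase M, ∀ y, x ≤ y → y ∈ G.erase M := by
      intro x hx y hxy
      obtain ⟨hxne, hxG⟩ := Finset.mem_erase.1 hx
      refine Finset.mem_erase.2 ⟨?_, hG x hxG y hxy⟩
      rintro rfl
      rcases eq_or_lt_of_le hxy with rfl | hlt
      · exact hxne rfl
      · exact hMmin x hxG hlt
    have hcard' : (G.erase M).card = n := by
      rw [Finset.card_erase_of_mem hMG, hc]; rfl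
    -- the inner product doesn't depend on the coordinate at M
    have hPindep : ∀ (v : E → α) (a : α),
        (∏ R ∈ G.erase M, condP q (upF R \ {R}) R (Function.update v M a))
          = ∏ R ∈ G.erase M, condP q (upF R \ {R}) R v := by
      intro v a
      refine Finset.prod_congr rfl fun R hR => ?_
      apply condP_congr
      intro x hx
      apply Function.update_of_ne
      intro hxM
      rw [insert_upF] at hx
      obtain ⟨hRne, hRG⟩ := Finset.mem_erase.1 hR
      have hRM : R ≤ M := hxM ▸ mem_upF.1 hx
      rcases eq_or_lt_of_le hRM with heq | hlt
      · exact hRne heq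
      · exact hMmin R hRG hlt
    have split : ∀ v : E → α, (∏ R ∈ G, condP q (upF R \ {R}) R v)
        = condP q (upF M \ {M}) M v * ∏ R ∈ G.erase M, condP q (upF R \ {R}) R v :=
      fun v => (Finset.mul_prod_erase G _ hMG).symm
    have hstep : (Fintype.card α : ℝ) * ∑ v : E → α, ∏ R ∈ G, condP q (upF R \ {R}) R v
        ≤ ∑ v : E → α, ∏ R ∈ G.erase M, condP q (upF R \ {R}) R v := by
      rw [← sum_update_free M _]
      have : ∀ v : E → α, ∑ a : α, ∏ R ∈ G, condP q (upF R \ {R}) R (Function.update v M a)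
          ≤ ∏ R ∈ G.erase M, condP q (upF R \ {R}) R v := by
        intro v
        calc ∑ a : α, ∏ R ∈ G, condP q (upF R \ {R}) R (Function.update v M a)
            = (∑ a : α, condP q (upF M \ {M}) M (Function.update v M a))
                * ∏ R ∈ G.erase M, condP q (upF R \ {R}) R v := by
              rw [Finset.sum_mul]
              refine Finset.sum_congr rfl fun a _ => ?_
              rw [split (Function.update v M a), hPindep v a]
          _ ≤ 1 * ∏ R ∈ G.erase M, condP q (upF R \ {R}) R v := by
              apply mul_le_mul_of_nonneg_right (sum_condP_le q hq0 M v)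
              exact Finset.prod_nonneg fun R _ => condP_nonneg q hq0 _ _ _
          _ = ∏ R ∈ G.erase M, condP q (upF R \ {R}) R v := one_mul _
      exact Finset.sum_le_sum fun v _ => this v
    have hih := ih (G.erase M) hG' hcard'
    have : (Fintype.card α : ℝ) * ∑ v : E → α, ∏ R ∈ G, condP q (upF R \ {R}) R v
        ≤ (Fintype.card (E → α) : ℝ) / (Fintype.card α : ℝ) ^ n :=
      le_trans hstep hih
    rw [pow_succ]
    rw [div_mul_eq_div_div]
    rw [le_div_iff₀ hcα]
    linarith [this]

/-- The marginal of a Bayes-net law on an up-set equals the product of its factors. -/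
lemma margOn_upset_eq_prod (q : (E → α) → ℝ) (hq0 : ∀ v, 0 ≤ q v)
    (hq1 : ∑ v : E → α, q v = 1)
    (hfact : ∀ u, q u = ∏ S : E, condP q (upF S \ {S}) S u) :
    ∀ (n : ℕ) (G : Finset E), (∀ x ∈ G, ∀ y, x ≤ y → y ∈ G) →
      (Finset.univ \ G).card = n →
      ∀ u, margOn q G u = ∏ S ∈ G, condP q (upF S \ {S}) S u := by
  intro n
  induction n with
  | zero =>
    intro G _ hc u
    have hGuniv : G = Finset.univ := by
      have h1 : Finset.univ \ G = ∅ := Finset.card_eq_zero.1 hc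
      apply Finset.eq_univ_iff_forall.2
      intro x
      by_contra hxG
      have : x ∈ Finset.univ \ G := mem_sdiff.2 ⟨mem_univ x, hxG⟩
      rw [h1] at this; exact absurd this (notMem_empty x)
    subst hGuniv
    rw [margOn_univ, hfact u]
  | succ n ih =>
    intro G hG hc u
    have hne : (Finset.univ \ G).Nonempty := by
      rw [← Finset.card_pos, hc]; omega
    obtain ⟨S, hSD, hSmax⟩ : ∃ S ∈ Finset.univ \ G, ∀ y ∈ Finset.univ \ G, ¬ S < y := by
      obtain ⟨S, hS⟩ := Finset.exists_maximal hne
      exact ⟨S, hS.1, fun y hy hlt => lt_irrefl _ (lt_of_lt_of_le hlt (hS.2 hy hlt.le))⟩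
    have hSG : S ∉ G := (mem_sdiff.1 hSD).2
    have hα : Nonempty α := by
      by_contra hα
      haveI : IsEmpty (E → α) := ⟨fun f => hα ⟨f S⟩⟩
      rw [Finset.univ_eq_empty, Finset.sum_empty] at hq1
      norm_num at hq1
    have hGplus : ∀ x ∈ insert S G, ∀ y, x ≤ y → y ∈ insert S G := by
      intro x hx y hxy
      rcases mem_insert.1 hx with rfl | hx
      · rcases eq_or_lt_of_le hxy with rfl | hlt
        · exact mem_insert_self _ _
        · by_cases hyG : y ∈ G
          · exact mem_insert_of_mem hyG
          · exact absurd hlt (hSmax y (mem_sdiff.2 ⟨mem_univ y, hyG⟩))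
      · exact mem_insert_of_mem (hG x hx y hxy)
    have hcard : (Finset.univ \ insert S G).card = n := by
      rw [Finset.sdiff_insert, Finset.card_erase_of_mem hSD, hc]; rfl
    have hupFS : upF S \ {S} ⊆ G := by
      intro x hx
      obtain ⟨hx1, hx2⟩ := Finset.mem_sdiff.1 hx
      have hlt : S < x := lt_of_le_of_ne (mem_upF.1 hx1)
        (fun h => hx2 (Finset.mem_singleton.2 h.symm))
      by_contra hxG
      exact hSmax x (mem_sdiff.2 ⟨mem_univ x, hxG⟩) hlt
    have hfix : ∀ (v : E → α) (a : α), ∀ R ∈ G,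
        condP q (upF R \ {R}) R (Function.update v S a)
        = condP q (upF R \ {R}) R v := by
      intro v a R hR
      apply condP_congr
      intro x hx
      apply Function.update_of_ne
      rintro rfl
      rw [insert_upF] at hx
      exact hSG (hG R hR x (mem_upF.1 hx))
    have hSnotin : S ∉ upF S \ {S} := fun h => (mem_sdiff.1 h).2 (mem_singleton_self S)
    have hdenom : ∀ (v : E → α) (a : α),
        margOn q (upF S \ {S}) (Function.update v S a) = margOn q (upF S \ {S}) v := by
      intro v a
      apply margOn_congr
      intro x hx
      exact Function.update_of_ne (by rintro rfl; exact hSnotin hx) _ _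
    have step : ∀ v : E → α, margOn q G v
        = (∑ a : α, condP q (upF S \ {S}) S (Function.update v S a))
            * ∏ R ∈ G, condP q (upF R \ {R}) R v := by
      intro v
      rw [margOn_insert q hSG v, Finset.sum_mul]
      refine Finset.sum_congr rfl fun a _ => ?_
      rw [ih (insert S G) hGplus hcard (Function.update v S a),
          Finset.prod_insert hSG]
      congr 1
      exact Finset.prod_congr rfl fun R hR => hfix v a R hR
    -- pointwise inequality
    have hle : ∀ v : E → α, margOn q G v ≤ ∏ R ∈ G, condP q (upF R \ {R}) R v := by
      intro v
      rw [step v]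
      have h1 := sum_condP_le q hq0 S v
      have h2 : (0:ℝ) ≤ ∏ R ∈ G, condP q (upF R \ {R}) R v :=
        Finset.prod_nonneg fun R _ => condP_nonneg q hq0 _ _ _
      nlinarith
    -- total masses agree
    have hsum_m : ∑ v : E → α, margOn q G v
        = (Fintype.card α : ℝ) ^ (n + 1) := sum_margOn q hq1 (n+1) G hc
    have hcG : G.card = Fintype.card E - (n + 1) := by
      have := Finset.card_sdiff_of_subset (Finset.subset_univ G)
      rw [hc, Finset.card_univ] at this
      have h2 := Finset.card_le_card (Finset.subset_univ G)
      rw [Finset.card_univ] at h2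
      omega
    have hn1 : n + 1 ≤ Fintype.card E := by
      have := Finset.card_le_card (Finset.sdiff_subset (s := Finset.univ) (t := G))
      rw [hc, Finset.card_univ] at this
      exact this
    have hsum_P : ∑ v : E → α, ∏ R ∈ G, condP q (upF R \ {R}) R v
        ≤ (Fintype.card α : ℝ) ^ (n + 1) := by
      have := sum_prodP_le q hq0 hα G.card G hG rfl
      rw [Fintype.card_fun, hcG] at this
      have hcα : (0:ℝ) < (Fintype.card α : ℝ) := by
        have := Fintype.card_pos_iff.2 hα
        exact_mod_cast this
      calc ∑ v : E → α, ∏ R ∈ G, condP q (upF R \ {R}) R v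
          ≤ ((Fintype.card α : ℝ) ^ Fintype.card E)
              / (Fintype.card α : ℝ) ^ (Fintype.card E - (n+1)) := by
            exact_mod_cast this
        _ = (Fintype.card α : ℝ) ^ (n + 1) := by
            rw [eq_comm, eq_div_iff (pow_ne_zero _ hcα.ne'), ← pow_add]
            congr 1
            omega
    -- pointwise equality from sum comparison
    have hall : ∀ v ∈ Finset.univ (α := E → α),
        (∏ R ∈ G, condP q (upF R \ {R}) R v) - margOn q G v = 0 := by
      rw [← Finset.sum_eq_zero_iff_of_nonneg]
      · rw [Finset.sum_sub_distrib, hsum_m]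
        have : ∑ v : E → α, ∏ R ∈ G, condP q (upF R \ {R}) R v
            ≥ (Fintype.card α : ℝ) ^ (n+1) := by
          rw [← hsum_m]
          exact Finset.sum_le_sum fun v _ => hle v
        linarith
      · intro v _
        have := hle v
        linarith
    have := hall u (mem_univ u)
    linarith

/-! ### Recoding lemmas for tuples -/

section Recode

variable {β : Type*} [Fintype β] [DecidableEq β]

lemma entRV_swap {κ₁ κ₂ : Type*} [Fintype κ₁] [DecidableEq κ₁] [Fintype κ₂] [DecidableEq κ₂]
    (μ : Ω → ℝ) (W₁ : Ω → κ₁) (W₂ : Ω → κ₂) :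
    entRV μ (fun ω => (W₁ ω, W₂ ω)) = entRV μ (fun ω => (W₂ ω, W₁ ω)) := by
  have h := entRV_comp_inj (f := Prod.swap) μ (fun ω => (W₂ ω, W₁ ω)) Prod.swap_injective
  convert h using 2
  rfl

lemma entRV_tup_pair (μ : Ω → ℝ) (U : E → Ω → α) (A C : Finset E) :
    entRV μ (fun ω => (tupRV U A ω, tupRV U C ω)) = entRV μ (tupRV U (A ∪ C)) := by
  have hinj : Function.Injective (fun u : (↥(A ∪ C) → α) =>
      ((fun s : ↥A => u ⟨s.1, Finset.mem_union_left C s.2⟩),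
       (fun s : ↥C => u ⟨s.1, Finset.mem_union_right A s.2⟩))) := by
    intro u v h
    simp only [Prod.mk.injEq] at h
    funext s
    rcases Finset.mem_union.1 s.2 with hs | hs
    · exact congrFun h.1 ⟨s.1, hs⟩
    · exact congrFun h.2 ⟨s.1, hs⟩
  have h := entRV_comp_inj μ (tupRV U (A ∪ C)) hinj
  convert h using 2
  rfl

lemma entRV_tup_mid (μ : Ω → ℝ) (U : E → Ω → α) (A C : Finset E) (W : Ω → β) :
    entRV μ (fun ω => (tupRV U A ω, W ω, tupRV U C ω))
      = entRV μ (fun ω => (tupRV U (A ∪ C) ω, W ω)) := by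
  have hinj : Function.Injective (fun p : (↥(A ∪ C) → α) × β =>
      ((fun s : ↥A => p.1 ⟨s.1, Finset.mem_union_left C s.2⟩), p.2,
       (fun s : ↥C => p.1 ⟨s.1, Finset.mem_union_right A s.2⟩))) := by
    intro u v h
    simp only [Prod.mk.injEq] at h
    obtain ⟨h1, h2, h3⟩ := h
    refine Prod.ext ?_ h2
    funext s
    rcases Finset.mem_union.1 s.2 with hs | hs
    · exact congrFun h1 ⟨s.1, hs⟩
    · exact congrFun h3 ⟨s.1, hs⟩
  have h := entRV_comp_inj μ (fun ω => (tupRV U (A ∪ C) ω, W ω)) hinj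
  convert h using 2
  rfl

lemma entRV_tup_quad (μ : Ω → ℝ) (U : E → Ω → α) (A C D : Finset E) (W : Ω → β) :
    entRV μ (fun ω => (tupRV U A ω, tupRV U C ω, W ω, tupRV U D ω))
      = entRV μ (fun ω => (tupRV U (A ∪ C ∪ D) ω, W ω)) := by
  have hinj : Function.Injective (fun p : (↥(A ∪ C ∪ D) → α) × β =>
      ((fun s : ↥A => p.1 ⟨s.1, Finset.mem_union_left D (Finset.mem_union_left C s.2)⟩),
       (fun s : ↥C => p.1 ⟨s.1, Finset.mem_union_left D (Finset.mem_union_right A s.2)⟩),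
       p.2,
       (fun s : ↥D => p.1 ⟨s.1, Finset.mem_union_right (A ∪ C) s.2⟩))) := by
    intro u v h
    simp only [Prod.mk.injEq] at h
    obtain ⟨h1, h2, h3, h4⟩ := h
    refine Prod.ext ?_ h3
    funext s
    rcases Finset.mem_union.1 s.2 with hs | hs
    · rcases Finset.mem_union.1 hs with hs' | hs'
      · exact congrFun h1 ⟨s.1, hs'⟩
      · exact congrFun h2 ⟨s.1, hs'⟩
    · exact congrFun h4 ⟨s.1, hs⟩
  have h := entRV_comp_inj μ (fun ω => (tupRV U (A ∪ C ∪ D) ω, W ω)) hinj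
  convert h using 2
  rfl

/-- Bridge between `margOn` of the joint pmf and `pOf` of a tuple. -/
lemma margOn_pOf (μ : Ω → ℝ) (U : E → Ω → α) (G : Finset E) (u : E → α) :
    margOn (pOf μ (fun ω (S : E) => U S ω)) G u
      = pOf μ (tupRV U G) (fun s => u s.1) := by
  unfold margOn pOf tupRV
  calc (∑ v : E → α, if ∀ a ∈ G, v a = u a then
          (∑ ω : Ω, if (fun S => U S ω) = v then μ ω else 0) else 0)
      = ∑ v : E → α, ∑ ω : Ω, (if ∀ a ∈ G, v a = u a then
          (if (fun S => U S ω) = v then μ ω else 0) else 0) := by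
        refine Finset.sum_congr rfl fun v _ => ?_
        split
        · rfl
        · simp
    _ = ∑ ω : Ω, ∑ v : E → α, (if ∀ a ∈ G, v a = u a then
          (if (fun S => U S ω) = v then μ ω else 0) else 0) := Finset.sum_comm
    _ = ∑ ω : Ω, (if (fun s : ↥G => U s.1 ω) = (fun s => u s.1) then μ ω else 0) := by
        refine Finset.sum_congr rfl fun ω _ => ?_
        calc (∑ v : E → α, if ∀ a ∈ G, v a = u a then
                (if (fun S => U S ω) = v then μ ω else 0) else 0)
            = ∑ v : E → α, (if v = (fun S => U S ω) then
                (if ∀ a ∈ G, U a ω = u a then μ ω else 0) else 0) := by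
              refine Finset.sum_congr rfl fun v _ => ?_
              by_cases hv : v = fun S => U S ω
              · subst hv
                simp
              · have hv' : ¬((fun S => U S ω) = v) := fun h => hv h.symm
                rw [if_neg hv]
                rw [show (if ∀ a ∈ G, v a = u a then
                    (if (fun S => U S ω) = v then μ ω else 0) else 0)
                  = (if ∀ a ∈ G, v a = u a then (0:ℝ) else 0) from by rw [if_neg hv']]
                split <;> rfl
          _ = (if ∀ a ∈ G, U a ω = u a then μ ω else 0) := by simp
          _ = (if (fun s : ↥G => U s.1 ω) = (fun s => u s.1) then μ ω else 0) := by
              refine (if_congr ?_ rfl rfl).symm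
              rw [funext_iff]
              constructor
              · intro h a ha; exact h ⟨a, ha⟩
              · intro h s; exact h s.1 s.2

end Recode

set_option linter.unusedSectionVars false in
lemma entRV_tup_qsum (μ : Ω → ℝ) (U : E → Ω → α) (G : Finset E) :
    entRV μ (tupRV U G) = -∑ u : E → α,
      pOf μ (fun ω (S : E) => U S ω) u *
        Real.logb 2 (margOn (pOf μ (fun ω (S : E) => U S ω)) G u) := by
  rw [entRV_eq_omega]
  rw [sum_pOf_mul μ (fun ω (S : E) => U S ω)
    (fun u => Real.logb 2 (margOn (pOf μ (fun ω (S : E) => U S ω)) G u))]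
  congr 1
  refine Finset.sum_congr rfl fun ω _ => ?_
  congr 2
  rw [margOn_pOf μ U G]
  rfl

/-- (Polymatroid structure of the receiver region.) If the auxiliary random
variables `(U_S : S ∈ W)` are superposition-admitting, i.e. their joint law
factors as `p(U_W) = Π_S p(U_S | U_{↑{S}\{S}})`, then
`ρ(B) = I(U_B ; Y | U_{W∖B})` is normalized, non-decreasing and submodular on
the down-set lattice of `W`. -/
theorem receiver_region_polymatroid
    {β : Type*} [Fintype β] [DecidableEq β]
    (μ : Ω → ℝ) (hμ : ∀ ω, 0 ≤ μ ω) (hμ1 : ∑ ω : Ω, μ ω = 1)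
    (U : E → Ω → α) (Y : Ω → β)
    (hfact : ∀ u : E → α,
      pOf μ (fun ω (S : E) => U S ω) u =
        ∏ S : E, condP (pOf μ (fun ω (S : E) => U S ω)) (upF S \ {S}) S u)
    (ρ : Finset E → ℝ)
    (hρ : ∀ B : Finset E, (∀ x ∈ B, ∀ y, y ≤ x → y ∈ B) →
      ρ B = cmiRV μ (tupRV U B) Y (tupRV U (Finset.univ \ B))) :
    ρ ∅ = 0 ∧
    (∀ B B' : Finset E, (∀ x ∈ B, ∀ y, y ≤ x → y ∈ B) →
      (∀ x ∈ B', ∀ y, y ≤ x → y ∈ B') → B ⊆ B' → ρ B ≤ ρ B') ∧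
    (∀ B B' : Finset E, (∀ x ∈ B, ∀ y, y ≤ x → y ∈ B) →
      (∀ x ∈ B', ∀ y, y ≤ x → y ∈ B') →
      ρ (B ∩ B') + ρ (B ∪ B') ≤ ρ B + ρ B') := by
  classical
  have hq0 : ∀ v : E → α, 0 ≤ pOf μ (fun ω (S : E) => U S ω) v :=
    fun v => pOf_nonneg hμ _ v
  have hq1 : ∑ v : E → α, pOf μ (fun ω (S : E) => U S ω) v = 1 := by
    rw [sum_pOf]; exact hμ1
  have hupmarg : ∀ G : Finset E, (∀ x ∈ G, ∀ y, x ≤ y → y ∈ G) → ∀ u : E → α,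
      margOn (pOf μ (fun ω (S : E) => U S ω)) G u
        = ∏ S ∈ G, condP (pOf μ (fun ω (S : E) => U S ω)) (upF S \ {S}) S u :=
    fun G hG u => margOn_upset_eq_prod _ hq0 hq1 hfact _ G hG rfl u
  have hcompup : ∀ B : Finset E, (∀ x ∈ B, ∀ y, y ≤ x → y ∈ B) →
      (∀ x ∈ Finset.univ \ B, ∀ y, x ≤ y → y ∈ Finset.univ \ B) := by
    intro B hB x hx y hxy
    exact mem_sdiff.2 ⟨mem_univ y, fun hyB => (mem_sdiff.1 hx).2 (hB y hyB x hxy)⟩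
  -- modularity of joint entropy on up-sets
  have h0mod : ∀ G G' : Finset E, (∀ x ∈ G, ∀ y, x ≤ y → y ∈ G) →
      (∀ x ∈ G', ∀ y, x ≤ y → y ∈ G') →
      entRV μ (tupRV U (G ∪ G')) + entRV μ (tupRV U (G ∩ G'))
        = entRV μ (tupRV U G) + entRV μ (tupRV U G') := by
    intro G G' hG hG'
    have hGu : ∀ x ∈ G ∪ G', ∀ y, x ≤ y → y ∈ G ∪ G' := by
      intro x hx y hxy
      rcases mem_union.1 hx with h | h
      · exact mem_union_left _ (hG x h y hxy)
      · exact mem_union_right _ (hG' x h y hxy)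
    have hGi : ∀ x ∈ G ∩ G', ∀ y, x ≤ y → y ∈ G ∩ G' := by
      intro x hx y hxy
      exact mem_inter.2 ⟨hG x (mem_inter.1 hx).1 y hxy, hG' x (mem_inter.1 hx).2 y hxy⟩
    rw [entRV_tup_qsum μ U (G ∪ G'), entRV_tup_qsum μ U (G ∩ G'),
        entRV_tup_qsum μ U G, entRV_tup_qsum μ U G']
    rw [← neg_add, ← neg_add, ← Finset.sum_add_distrib, ← Finset.sum_add_distrib]
    congr 1
    refine Finset.sum_congr rfl fun u _ => ?_
    by_cases hqu : pOf μ (fun ω (S : E) => U S ω) u = 0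
    · rw [hqu]; ring
    · have hqpos : 0 < pOf μ (fun ω (S : E) => U S ω) u :=
        lt_of_le_of_ne (hq0 u) (Ne.symm hqu)
      have hpos : ∀ H : Finset E, 0 < margOn (pOf μ (fun ω (S : E) => U S ω)) H u :=
        fun H => lt_of_lt_of_le hqpos (margOn_self_le _ hq0 H u)
      have hprod : margOn (pOf μ (fun ω (S : E) => U S ω)) (G ∪ G') u
            * margOn (pOf μ (fun ω (S : E) => U S ω)) (G ∩ G') u
          = margOn (pOf μ (fun ω (S : E) => U S ω)) G u
            * margOn (pOf μ (fun ω (S : E) => U S ω)) G' u := by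
        rw [hupmarg _ hGu u, hupmarg _ hGi u, hupmarg _ hG u, hupmarg _ hG' u]
        exact Finset.prod_union_inter
      rw [← mul_add, ← mul_add]
      congr 1
      rw [← Real.logb_mul (hpos _).ne' (hpos _).ne',
          ← Real.logb_mul (hpos _).ne' (hpos _).ne', hprod]
  -- formula for ρ
  have hrho : ∀ B : Finset E, (∀ x ∈ B, ∀ y, y ≤ x → y ∈ B) →
      ρ B = (entRV μ (tupRV U Finset.univ)
              - entRV μ (fun ω => (tupRV U Finset.univ ω, Y ω)))
        + (entRV μ (fun ω => (tupRV U (Finset.univ \ B) ω, Y ω))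
            - entRV μ (tupRV U (Finset.univ \ B))) := by
    intro B hB
    rw [hρ B hB]
    simp only [cmiRV]
    rw [entRV_tup_pair μ U B (Finset.univ \ B)]
    rw [entRV_swap μ Y (tupRV U (Finset.univ \ B))]
    rw [entRV_tup_mid μ U B (Finset.univ \ B) Y]
    rw [Finset.union_sdiff_of_subset (Finset.subset_univ B)]
    ring
  -- monotonicity auxiliary: conditioning on more variables decreases H(Y | ·)
  have mono_aux : ∀ G' G : Finset E, G' ⊆ G →
      entRV μ (fun ω => (tupRV U G ω, Y ω)) - entRV μ (tupRV U G)
        ≤ entRV μ (fun ω => (tupRV U G' ω, Y ω)) - entRV μ (tupRV U G') := by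
    intro G' G hsub
    have h := ssa μ hμ hμ1 (tupRV U (G \ G')) Y (tupRV U G')
    rw [entRV_tup_mid μ U (G \ G') G' Y, entRV_tup_pair μ U (G \ G') G',
        Finset.sdiff_union_of_subset hsub,
        entRV_swap μ Y (tupRV U G')] at h
    linarith
  -- submodularity auxiliary for H(U_G, Y)
  have hYsub : ∀ G G' : Finset E,
      entRV μ (fun ω => (tupRV U (G ∪ G') ω, Y ω))
        + entRV μ (fun ω => (tupRV U (G ∩ G') ω, Y ω))
      ≤ entRV μ (fun ω => (tupRV U G ω, Y ω))
        + entRV μ (fun ω => (tupRV U G' ω, Y ω)) := by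
    intro G G'
    have h := ssa μ hμ hμ1 (tupRV U (G \ G')) (tupRV U (G' \ G))
      (fun ω => (Y ω, tupRV U (G ∩ G') ω))
    have h' : entRV μ (fun ω => (tupRV U (G \ G') ω, tupRV U (G' \ G) ω, Y ω,
          tupRV U (G ∩ G') ω))
        + entRV μ (fun ω => (Y ω, tupRV U (G ∩ G') ω))
        ≤ entRV μ (fun ω => (tupRV U (G \ G') ω, Y ω, tupRV U (G ∩ G') ω))
          + entRV μ (fun ω => (tupRV U (G' \ G) ω, Y ω, tupRV U (G ∩ G') ω)) := h
    rw [entRV_tup_quad μ U (G \ G') (G' \ G) (G ∩ G') Y,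
        entRV_tup_mid μ U (G \ G') (G ∩ G') Y,
        entRV_tup_mid μ U (G' \ G) (G ∩ G') Y,
        entRV_swap μ Y (tupRV U (G ∩ G'))] at h'
    have hu1 : (G \ G') ∪ (G' \ G) ∪ (G ∩ G') = G ∪ G' := by
      ext x; simp only [mem_union, mem_sdiff, mem_inter]; tauto
    have hu2 : (G \ G') ∪ (G ∩ G') = G := Finset.sdiff_union_inter G G'
    have hu3 : (G' \ G) ∪ (G ∩ G') = G' := by
      rw [Finset.inter_comm]; exact Finset.sdiff_union_inter G' G
    rw [hu1, hu2, hu3] at h'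
    linarith
  refine ⟨?_, ?_, ?_⟩
  · have h := hrho ∅ (by intro x hx; exact absurd hx (notMem_empty x))
    rw [Finset.sdiff_empty] at h
    rw [h]; ring
  · intro B B' hB hB' hBB'
    rw [hrho B hB, hrho B' hB']
    have h := mono_aux (Finset.univ \ B') (Finset.univ \ B)
      (Finset.sdiff_subset_sdiff (Finset.Subset.refl _) hBB')
    linarith
  · intro B B' hB hB'
    have hBi : ∀ x ∈ B ∩ B', ∀ y, y ≤ x → y ∈ B ∩ B' := by
      intro x hx y hxy
      exact mem_inter.2 ⟨hB x (mem_inter.1 hx).1 y hxy, hB' x (mem_inter.1 hx).2 y hxy⟩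
    have hBu : ∀ x ∈ B ∪ B', ∀ y, y ≤ x → y ∈ B ∪ B' := by
      intro x hx y hxy
      rcases mem_union.1 hx with h | h
      · exact mem_union_left _ (hB x h y hxy)
      · exact mem_union_right _ (hB' x h y hxy)
    rw [hrho _ hBi, hrho _ hBu, hrho B hB, hrho B' hB']
    have hcomp1 : Finset.univ \ (B ∩ B') = (Finset.univ \ B) ∪ (Finset.univ \ B') := by
      ext x; simp only [mem_sdiff, mem_union, mem_inter, mem_univ, true_and]; tauto
    have hcomp2 : Finset.univ \ (B ∪ B') = (Finset.univ \ B) ∩ (Finset.univ \ B') := by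
      ext x; simp only [mem_sdiff, mem_union, mem_inter, mem_univ, true_and]; tauto
    rw [hcomp1, hcomp2]
    have h1 := hYsub (Finset.univ \ B) (Finset.univ \ B')
    have h2 := h0mod (Finset.univ \ B) (Finset.univ \ B') (hcompup B hB) (hcompup B' hB')
    linarith
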